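/- Let g be the 2n-dimensional Lie algebra with basis f₁,…,f₂ₙ and structure equations df¹ = f²∧f³, df² = -f²∧f^{2n}, df³ = f³∧f^{2n}, df^{2l+2} = b_l f^{2l+3}∧f^{2n}, df^{2l+3} = -b_l f^{2l+2}∧f^{2n} for 1 ≤ l ≤ n-2, df^{2n} = 0 (b_l ∈ ℝ). Then g admits no symplectic form: every closed 2-form Ω on g satisfies ι_{f₁}Ω = 0, hence is degenerate. -/
import Mathlib

noncomputable section
/-- Extension of a `Fin n`-indexed vector by zero to `ℕ`. -/
def ext8 (n : ℕ) (x : Fin n → ℝ) : ℕ → ℝ := fun i => if h : i < n then x ⟨i, h⟩ else 0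

/-- Bracket with `[f₂,f₃] = -f₁`, `[f₂ₙ,f₂] = -f₂`, `[f₂ₙ,f₃] = f₃`,
`[f₂ₙ,f_{2l+2}] = b_l f_{2l+3}`, `[f₂ₙ,f_{2l+3}] = -b_l f_{2l+2}` (0-based indices). -/
def br8 (n : ℕ) (b : ℕ → ℝ) (x y : Fin (2*n) → ℝ) : Fin (2*n) → ℝ := fun k =>
  let X := ext8 (2*n) x
  let Y := ext8 (2*n) y
  let w := fun i : ℕ => X (2*n-1) * Y i - X i * Y (2*n-1)
  if (k : ℕ) = 0 then -(X 1 * Y 2 - X 2 * Y 1)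
  else if (k : ℕ) = 1 then -(w 1)
  else if (k : ℕ) = 2 then w 2
  else if (k : ℕ) = 2*n-1 then 0
  else if (k : ℕ) % 2 = 1 then -(b (((k : ℕ) - 1)/2)) * w ((k : ℕ) + 1)
  else b ((k : ℕ)/2 - 1) * w ((k : ℕ) - 1)

/-- basis vector -/
def E8 (n j : ℕ) : Fin n → ℝ := fun i => if (i : ℕ) = j then 1 else 0

lemma ext8_E8 (n j : ℕ) (hj : j < n) :
    ext8 n (E8 n j) = fun i => if i = j then (1:ℝ) else 0 := by
  funext i
  unfold ext8 E8
  split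
  · simp
  · rw [if_neg]; omega

lemma br8_antisymm (n : ℕ) (b : ℕ → ℝ) (x y : Fin (2*n) → ℝ) :
    br8 n b x y = - br8 n b y x := by
  funext k
  simp only [br8, Pi.neg_apply]
  split_ifs <;> ring

lemma br8_E0_right (n : ℕ) (hn : 2 ≤ n) (b : ℕ → ℝ) (x : Fin (2*n) → ℝ) :
    br8 n b x (E8 (2*n) 0) = 0 := by
  funext k
  simp only [br8, ext8_E8 (2*n) 0 (by omega), Pi.zero_apply]
  split_ifs <;> (try omega) <;> simp_all <;> omega

lemma br8_E1_E2 (n : ℕ) (hn : 2 ≤ n) (b : ℕ → ℝ) :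
    br8 n b (E8 (2*n) 1) (E8 (2*n) 2) = - E8 (2*n) 0 := by
  funext k
  simp only [br8, ext8_E8 (2*n) 1 (by omega), ext8_E8 (2*n) 2 (by omega),
    Pi.neg_apply, E8]
  split_ifs <;> (try omega) <;> simp_all <;> omega

lemma br8_Etop_E1 (n : ℕ) (hn : 2 ≤ n) (b : ℕ → ℝ) :
    br8 n b (E8 (2*n) (2*n-1)) (E8 (2*n) 1) = - E8 (2*n) 1 := by
  funext k
  simp only [br8, ext8_E8 (2*n) (2*n-1) (by omega), ext8_E8 (2*n) 1 (by omega),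
    Pi.neg_apply, E8]
  split_ifs <;> (try omega) <;> simp_all <;> omega

lemma br8_Etop_E2 (n : ℕ) (hn : 2 ≤ n) (b : ℕ → ℝ) :
    br8 n b (E8 (2*n) (2*n-1)) (E8 (2*n) 2) = E8 (2*n) 2 := by
  funext k
  simp only [br8, ext8_E8 (2*n) (2*n-1) (by omega), ext8_E8 (2*n) 2 (by omega), E8]
  split_ifs <;> (try omega) <;> simp_all <;> omega

lemma br8_Ek_E1 (n : ℕ) (hn : 2 ≤ n) (b : ℕ → ℝ) (j : ℕ) (hj : j < 2*n)
    (h2 : j ≠ 2) (ht : j ≠ 2*n-1) :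
    br8 n b (E8 (2*n) j) (E8 (2*n) 1) = 0 := by
  funext k
  simp only [br8, ext8_E8 (2*n) j hj, ext8_E8 (2*n) 1 (by omega), Pi.zero_apply]
  split_ifs <;> (try omega) <;> simp_all <;> omega

lemma br8_E2_Ek (n : ℕ) (hn : 2 ≤ n) (b : ℕ → ℝ) (j : ℕ) (hj : j < 2*n)
    (h1 : j ≠ 1) (ht : j ≠ 2*n-1) :
    br8 n b (E8 (2*n) 2) (E8 (2*n) j) = 0 := by
  funext k
  simp only [br8, ext8_E8 (2*n) j hj, ext8_E8 (2*n) 2 (by omega), Pi.zero_apply]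
  split_ifs <;> (try omega) <;> simp_all <;> omega

/-- The Lie algebra with structure equations
`df¹ = f²∧f³`, `df² = -f²∧f^{2n}`, `df³ = f³∧f^{2n}`,
`df^{2l+2} = b_l f^{2l+3}∧f^{2n}`, `df^{2l+3} = -b_l f^{2l+2}∧f^{2n}`, `df^{2n} = 0`
admits no symplectic form: every closed 2-form `Ω` satisfies `ι_{f₁}Ω = 0`,
hence is degenerate. -/
theorem stmt_8 (n : ℕ) (hn : 2 ≤ n) (b : ℕ → ℝ)
    (Ω : (Fin (2*n) → ℝ) →ₗ[ℝ] (Fin (2*n) → ℝ) →ₗ[ℝ] ℝ)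
    (halt : ∀ x y, Ω x y = - Ω y x)
    (hclosed : ∀ x y z,
      Ω (br8 n b x y) z + Ω (br8 n b z x) y + Ω (br8 n b y z) x = 0) :
    (∀ y, Ω (fun i => if (i : ℕ) = 0 then (1:ℝ) else 0) y = 0) ∧
    ∃ x : Fin (2*n) → ℝ, x ≠ 0 ∧ ∀ y, Ω x y = 0 := by
  have hN : 0 < 2*n := by omega
  have br8_E0_left : ∀ y, br8 n b (E8 (2*n) 0) y = 0 := by
    intro y
    rw [br8_antisymm, br8_E0_right n hn b y, neg_zero]
  -- Ω (E8 (2*n) 0) (E8 (2*n) k) = 0 for all k < N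
  have key : ∀ j : ℕ, j < 2*n → Ω (E8 (2*n) 0) (E8 (2*n) j) = 0 := by
    intro j hj
    by_cases h1 : j = 1
    · subst h1
      have H := hclosed (E8 (2*n) (2*n-1)) (E8 (2*n) 1) (E8 (2*n) 0)
      rw [br8_Etop_E1 n hn b, br8_E0_left, br8_E0_right n hn b, map_neg, map_zero] at H
      simp only [LinearMap.neg_apply, LinearMap.zero_apply, add_zero] at H
      have : Ω (E8 (2*n) 1) (E8 (2*n) 0) = 0 := by linarith
      rw [halt] at this; linarith
    by_cases h2 : j = 2
    · subst h2
      have H := hclosed (E8 (2*n) (2*n-1)) (E8 (2*n) 2) (E8 (2*n) 0)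
      rw [br8_Etop_E2 n hn b, br8_E0_left, br8_E0_right n hn b, map_zero] at H
      simp only [LinearMap.zero_apply, add_zero] at H
      rw [halt] at H; linarith
    by_cases ht : j = 2*n-1
    · subst ht
      have H := hclosed (E8 (2*n) 1) (E8 (2*n) 2) (E8 (2*n) (2*n-1))
      rw [br8_E1_E2 n hn b, br8_Etop_E1 n hn b, map_neg, map_neg] at H
      have H2 : br8 n b (E8 (2*n) 2) (E8 (2*n) (2*n-1)) = - E8 (2*n) 2 := by
        rw [br8_antisymm, br8_Etop_E2 n hn b]
      rw [H2, map_neg] at H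
      simp only [LinearMap.neg_apply] at H
      have h12 := halt (E8 (2*n) 1) (E8 (2*n) 2)
      linarith
    · have H := hclosed (E8 (2*n) 1) (E8 (2*n) 2) (E8 (2*n) j)
      rw [br8_E1_E2 n hn b, br8_Ek_E1 n hn b j hj h2 ht,
        br8_E2_Ek n hn b j hj h1 ht, map_neg, map_zero] at H
      simp only [LinearMap.neg_apply, LinearMap.zero_apply, add_zero] at H
      linarith
  have hzero : Ω (E8 (2*n) 0) = 0 := by
    apply (Pi.basisFun ℝ (Fin (2*n))).ext
    intro i
    have h := key i.val i.isLt
    have he : (Pi.basisFun ℝ (Fin (2*n))) i = E8 (2*n) i.val := by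
      funext j
      simp [Pi.basisFun_apply, E8, Pi.single_apply, Fin.val_eq_val, eq_comm]
    rw [he, h, LinearMap.zero_apply]
  have hE : (fun i : Fin (2*n) => if (i : ℕ) = 0 then (1:ℝ) else 0) = E8 (2*n) 0 := rfl
  constructor
  · intro y
    rw [hE, hzero, LinearMap.zero_apply]
  · refine ⟨E8 (2*n) 0, ?_, fun y => by rw [hzero, LinearMap.zero_apply]⟩
    intro h
    have := congrFun h ⟨0, by omega⟩
    simp [E8] at this

end
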